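/- Let A be a symmetric unbounded operator on a Hilbert space H₀ with dense domain H₁ ⊆ H₀ such that A : H₁ → H₀ is Fredholm of index 0. Then A is self-adjoint, i.e., the domain of the adjoint A* equals H₁ and A* = A on H₁. -/

import Mathlib

open scoped RealInnerProductSpace

/-- A symmetric densely defined operator `A : H₁ → H₀` which is
Fredholm of index 0 is self-adjoint: the domain of the adjoint `A*` equals `H₁`
(a vector `v` admits an adjoint vector `y` iff `v ∈ H₁`), and on `H₁` the
adjoint is given by `A` itself. -/
theorem stmt_1 {H₀ : Type*} [NormedAddCommGroup H₀] [InnerProductSpace ℝ H₀]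
    [CompleteSpace H₀] (H₁ : Submodule ℝ H₀) (hdense : Dense (H₁ : Set H₀))
    (A : H₁ →ₗ[ℝ] H₀)
    (hsym : ∀ ξ η : H₁, ⟪(ξ : H₀), A η⟫ = ⟪A ξ, (η : H₀)⟫)
    (hker : FiniteDimensional ℝ (LinearMap.ker A))
    (hclosed : IsClosed ((LinearMap.range A : Submodule ℝ H₀) : Set H₀))
    (hcoker : FiniteDimensional ℝ ((LinearMap.range A)ᗮ : Submodule ℝ H₀))
    (hind : Module.finrank ℝ (LinearMap.ker A)
      = Module.finrank ℝ ((LinearMap.range A)ᗮ : Submodule ℝ H₀)) :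
    (∀ v : H₀, (∃ y : H₀, ∀ w : H₁, ⟪y, (w : H₀)⟫ = ⟪v, A w⟫) ↔ v ∈ H₁) ∧
    (∀ (v : H₁) (y : H₀), (∀ w : H₁, ⟪y, (w : H₀)⟫ = ⟪(v : H₀), A w⟫) → y = A v) := by
  classical
  -- The image of the kernel inside H₀
  set K : Submodule ℝ H₀ := (LinearMap.ker A).map H₁.subtype with hK
  have hKle : K ≤ (LinearMap.range A)ᗮ := by
    rintro x ⟨m, hm, rfl⟩
    intro u hu
    obtain ⟨w, rfl⟩ := hu
    rw [real_inner_comm]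
    calc ⟪((⟨m, m.2⟩ : H₁) : H₀), A w⟫ = ⟪A ⟨m, m.2⟩, (w : H₀)⟫ := hsym _ w
      _ = 0 := by
          have : A m = 0 := LinearMap.mem_ker.mp hm
          simp [this]
  have hKfr : Module.finrank ℝ K = Module.finrank ℝ (LinearMap.ker A) := by
    rw [hK]
    exact (Submodule.equivMapOfInjective H₁.subtype H₁.injective_subtype
      (LinearMap.ker A)).symm.finrank_eq
  have hKeq : K = (LinearMap.range A)ᗮ :=
    Submodule.eq_of_le_of_finrank_eq hKle (by rw [hKfr, hind])
  haveI : CompleteSpace (LinearMap.range A : Submodule ℝ H₀) :=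
    hclosed.completeSpace_coe
  -- decomposition of any vector
  have hcomp : ∀ x : H₀, ∃ (s m : H₁), m ∈ LinearMap.ker A ∧ x = A s + (m : H₀) := by
    intro x
    have hx : x ∈ (LinearMap.range A) ⊔ (LinearMap.range A)ᗮ := by
      rw [Submodule.sup_orthogonal_of_hasOrthogonalProjection]; trivial
    obtain ⟨a, ha, b, hb, rfl⟩ := Submodule.mem_sup.mp hx
    obtain ⟨s, rfl⟩ := ha
    rw [← hKeq] at hb
    obtain ⟨m, hm, rfl⟩ := hb
    exact ⟨s, m, hm, rfl⟩
  -- orthogonality to dense H₁ forces zero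
  have hzero : ∀ z : H₀, (∀ w : H₁, ⟪z, (w : H₀)⟫ = 0) → z = 0 := by
    intro z hz
    have hmem : z ∈ H₁ᗮ := by
      intro u hu
      rw [real_inner_comm]
      exact hz ⟨u, hu⟩
    have htop : H₁.topologicalClosure = ⊤ := by
      rw [SetLike.ext'_iff]
      simpa [Submodule.topologicalClosure_coe] using hdense.closure_eq
    have : H₁ᗮ = ⊥ := Submodule.topologicalClosure_eq_top_iff.mp htop
    simpa [this] using hmem
  constructor
  · intro v
    constructor
    · rintro ⟨y, hy⟩
      -- decompose y and v
      obtain ⟨u, m₁, hm₁, hy_dec⟩ := hcomp y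
      obtain ⟨s, m₂, hm₂, hv_dec⟩ := hcomp (v - (u : H₀))
      -- key identity : ⟪A s, A w⟫ = ⟪m₁, w⟫
      have key : ∀ w : H₁, ⟪A s, A w⟫ = ⟪(m₁ : H₀), (w : H₀)⟫ := by
        intro w
        have h1 : ⟪A s, A w⟫ = ⟪v - (u : H₀) - (m₂ : H₀), A w⟫ := by
          rw [hv_dec]; rw [add_sub_cancel_right]
        have h2 : ⟪(m₂ : H₀), A w⟫ = 0 := by
          rw [hsym m₂ w, LinearMap.mem_ker.mp hm₂]
          simp
        rw [h1, inner_sub_left, inner_sub_left, h2, sub_zero, ← hy 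
          , hsym u w, hy_dec, inner_add_left]
        ring
      have hm₁0 : (m₁ : H₀) = 0 := by
        have := key m₁
        rw [LinearMap.mem_ker.mp hm₁, inner_zero_right] at this
        exact (inner_self_eq_zero.mp this.symm)
      have hAs0 : A s = 0 := by
        have := key s
        rw [hm₁0] at this
        simp only [inner_zero_left] at this
        exact inner_self_eq_zero.mp this
      have : v = ((u + m₂ : H₁) : H₀) := by
        have := hv_dec
        rw [hAs0, zero_add] at this
        push_cast
        exact sub_eq_iff_eq_add'.mp this
      rw [this]
      exact (u + m₂).2
    · intro hv
      exact ⟨A ⟨v, hv⟩, fun w => by rw [← hsym ⟨v, hv⟩ w, real_inner_comm]⟩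
  · intro v y hy
    have : ∀ w : H₁, ⟪y - A v, (w : H₀)⟫ = 0 := by
      intro w
      rw [inner_sub_left, hy w, hsym v w, sub_self]
    have := hzero _ this
    exact sub_eq_zero.mp this
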